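/- Let A ⊆ Ω and B ⊆ Ω be fields with C = A ∩ B, and suppose A^s and B^s are linearly disjoint over C^s (where K^s is the separable closure). Then for any σ₁ ∈ Gal(A^s/A) and σ₂ ∈ Gal(B^s/B) with σ₁|_{C^s} = σ₂|_{C^s}, there exists σ ∈ Gal(A^sB^s/AB) restricting to σ₁ on A^s and to σ₂ on B^s. -/

import Mathlib

namespace PacPaper
variable {Ω : Type} [Field Ω] [IsAlgClosed Ω]

/-- The separable closure of a subfield `K` inside `Ω`. -/
noncomputable def sepCl (K : Subfield Ω) : Subfield Ω := (separableClosure K Ω).toSubfield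

/-- The (relative) algebraic closure of a subfield `K` inside `Ω`. -/
noncomputable def algCl (K : Subfield Ω) : Subfield Ω := (algebraicClosure K Ω).toSubfield

/-- The perfect (purely inseparable) closure of a subfield `K` inside `Ω`. -/
noncomputable def pCl (K : Subfield Ω) : Subfield Ω := (perfectClosure K Ω).toSubfield

/-- `A` and `B` are linearly disjoint over a common subfield `E`:
every finite subset of `A` which is linearly independent over `E` remains
linearly independent over `B`. -/
def LinDisj (E A B : Subfield Ω) : Prop :=
  ∀ s : Finset Ω, ↑s ⊆ (A : Set Ω) →
    LinearIndependent E (Subtype.val : {x : Ω // x ∈ s} → Ω) →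
    LinearIndependent B (Subtype.val : {x : Ω // x ∈ s} → Ω)

/-- `A` and `B` are free over `E`: every finite subset of `A` which is
algebraically independent over `E` remains algebraically independent over `B`. -/
def FreeOver (E A B : Subfield Ω) : Prop :=
  ∀ s : Finset Ω, ↑s ⊆ (A : Set Ω) →
    AlgebraicIndependent E (Subtype.val : {x : Ω // x ∈ s} → Ω) →
    AlgebraicIndependent B (Subtype.val : {x : Ω // x ∈ s} → Ω)

/-- `L` is a regular extension of `K`: `K ≤ L` and `L` is linearly disjoint
over `K` from the algebraic closure of `K`. -/
def IsRegularExt (K L : Subfield Ω) : Prop := K ≤ L ∧ LinDisj K L (algCl K)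

/-- `L` is a separable extension of `K`: `K ≤ L` and `L` is linearly disjoint
over `K` from the perfect closure of `K`. -/
def IsSepExt (K L : Subfield Ω) : Prop := K ≤ L ∧ LinDisj K L (pCl K)

/-- `K` is separably closed (in `Ω`). -/
def IsSepClosedIn (K : Subfield Ω) : Prop := sepCl K = K

/-- The Galois group `Gal(X/Y)`: ring automorphisms of `X` fixing the
elements of `X` lying in `Y`. -/
def galGrp (Y X : Subfield Ω) : Subgroup (X ≃+* X) where
  carrier := {f | ∀ x : X, (x : Ω) ∈ Y → f x = x}
  one_mem' := by intro x _; rfl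
  mul_mem' := by
    intro f g hf hg x hx
    show f (g x) = x
    rw [hg x hx, hf x hx]
  inv_mem' := by
    intro f hf x hx
    show f.symm x = x
    conv_lhs => rw [← hf x hx]
    exact f.symm_apply_apply x

/-- `f` (an automorphism of `S`) and `g` (an automorphism of `T`) agree on the
elements of the subfield `U`. -/
def Agree {S T : Subfield Ω} (f : S ≃+* S) (g : T ≃+* T) (U : Subfield Ω) : Prop :=
  ∀ (x : Ω) (h₁ : x ∈ S) (h₂ : x ∈ T), x ∈ U →
    ((f ⟨x, h₁⟩ : Ω) = (g ⟨x, h₂⟩ : Ω))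

/-- `σ` (an automorphism of the larger field `X`) restricts to `τ` on the
subfield `S`. -/
def RestrictsTo {X S : Subfield Ω} (σ : X ≃+* X) (τ : S ≃+* S) : Prop :=
  Agree σ τ S

end PacPaper

set_option synthInstance.maxHeartbeats 1000000
set_option maxHeartbeats 2000000

namespace PacAux
open PacPaper
variable {Ω : Type} [Field Ω]

theorem lin_indep_transfer {C K L : Subfield Ω} (hdisj : LinDisj C K L) {ι : Type}
    (v : ι → Ω) (hinj : Function.Injective v) (hvK : ∀ i, v i ∈ K)
    (hC : LinearIndependent C v) : LinearIndependent L v := by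
  rw [← linearIndepOn_id_range_iff hinj] at hC ⊢
  apply linearIndepOn_of_finite
  intro t hts htf
  have hC' : LinearIndependent C (fun x => x : t → Ω) := hC.mono hts
  have heq : ((htf.toFinset : Finset Ω) : Set Ω) = t := Set.Finite.coe_toFinset htf
  rw [← heq] at hC' ⊢
  have hsub : ↑htf.toFinset ⊆ (K : Set Ω) := by
    rw [heq]
    exact fun x hx => by obtain ⟨i, rfl⟩ := hts hx; exact hvK i
  exact hdisj htf.toFinset hsub hC'

section Key

variable {C K L : Subfield Ω}

/-- `K` as a `C`-submodule of `Ω`. -/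
def KMod (hCK : C ≤ K) : Submodule C Ω where
  carrier := K
  add_mem' := fun h h' => add_mem h h'
  zero_mem' := zero_mem K
  smul_mem' := fun c _ hx => mul_mem (hCK c.2) hx

theorem exists_basis (hCK : C ≤ K) : ∃ (ιB : Type) (w : ιB → Ω),
    (∀ k, w k ∈ K) ∧ Function.Injective w ∧ LinearIndependent C w ∧
    ∀ x : K, ∃ c : ιB →₀ C, (x : Ω) = ∑ k ∈ c.support, (c k : Ω) * w k := by
  classical
  let M := KMod hCK
  let e : Module.Basis (Module.Basis.ofVectorSpaceIndex C M) C M := Module.Basis.ofVectorSpace C M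
  refine ⟨Module.Basis.ofVectorSpaceIndex C M, fun k => ((e k : M) : Ω),
    fun k => (e k : M).2, Subtype.val_injective.comp e.injective,
    (e.linearIndependent).map' M.subtype (Submodule.ker_subtype M), ?_⟩
  intro x
  refine ⟨e.repr ⟨(x : Ω), x.2⟩, ?_⟩
  have h0 : (Finsupp.linearCombination C (⇑e)) (e.repr ⟨(x : Ω), x.2⟩) = ⟨(x : Ω), x.2⟩ :=
    e.linearCombination_repr _
  have h1 := congrArg (Subtype.val : M → Ω) h0
  rw [Finsupp.linearCombination_apply, Finsupp.sum] at h1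
  rw [AddSubmonoidClass.coe_finset_sum] at h1
  exact h1.symm.trans (Finset.sum_congr rfl fun k _ => by rw [SetLike.val_smul]; rfl)

theorem keyB (hCK : C ≤ K) (hCL : C ≤ L) (hdisj : LinDisj C K L)
    (σ₁ : K ≃+* K) (σ₂ : L ≃+* L)
    (hag : ∀ (x : Ω) (h₁ : x ∈ K) (h₂ : x ∈ L), x ∈ C →
      ((σ₁ ⟨x, h₁⟩ : Ω) = (σ₂ ⟨x, h₂⟩ : Ω)))
    {ι : Type} [Fintype ι] (a : ι → K) (b : ι → L)
    (h : ∑ i, (a i : Ω) * (b i : Ω) = 0) :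
    ∑ i, (σ₁ (a i) : Ω) * (σ₂ (b i) : Ω) = 0 := by
  classical
  obtain ⟨ιB, w, hwK, hwinj, hwC, hrep⟩ := exists_basis hCK
  have hwL : LinearIndependent L w := lin_indep_transfer hdisj w hwinj hwK hwC
  choose r hr using fun i => hrep (a i)
  set s : Finset ιB := Finset.univ.biUnion fun i => (r i).support with hs
  have hsupp : ∀ i, (r i).support ⊆ s := fun i =>
    Finset.subset_biUnion_of_mem (fun i => (r i).support) (Finset.mem_univ i)
  have claim1 : ∀ i, (a i : Ω) = ∑ k ∈ s, ((r i) k : Ω) * w k := by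
    intro i
    rw [hr i]
    exact Finset.sum_subset (hsupp i) (by
      intro k _ hk
      rw [Finsupp.notMem_support_iff.1 hk]
      simp)
  let g : ιB → L := fun k => ∑ i, (⟨((r i) k : Ω), hCL ((r i) k).2⟩ : L) * b i
  have hgcoe : ∀ k, (g k : Ω) = ∑ i, ((r i) k : Ω) * (b i : Ω) := by
    intro k
    rw [show (g k : Ω) = L.subtype (g k) from rfl, map_sum]
    rfl
  have hg0 : ∀ k ∈ s, g k = 0 := by
    have hsum : ∑ k ∈ s, (g k) • w k = 0 := by
      calc ∑ k ∈ s, (g k) • w k = ∑ k ∈ s, ∑ i, ((r i) k : Ω) * (b i : Ω) * w k := by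
            refine Finset.sum_congr rfl fun k _ => ?_
            rw [show (g k) • w k = (g k : Ω) * w k from rfl, hgcoe k, Finset.sum_mul]
        _ = ∑ i, ∑ k ∈ s, ((r i) k : Ω) * w k * (b i : Ω) := by
            rw [Finset.sum_comm]
            exact Finset.sum_congr rfl fun i _ => Finset.sum_congr rfl fun k _ => by ring
        _ = ∑ i, (a i : Ω) * (b i : Ω) := by
            refine Finset.sum_congr rfl fun i _ => ?_
            rw [← Finset.sum_mul, ← claim1 i]
        _ = 0 := h
    exact fun k hk => linearIndependent_iff'.1 hwL s g hsum k hk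
  have claim2 : ∀ i, (σ₁ (a i) : Ω)
      = ∑ k ∈ s, (σ₁ ⟨((r i) k : Ω), hCK ((r i) k).2⟩ : Ω) * (σ₁ ⟨w k, hwK k⟩ : Ω) := by
    intro i
    have heq : a i = ∑ k ∈ s, (⟨((r i) k : Ω), hCK ((r i) k).2⟩ : K) * ⟨w k, hwK k⟩ := by
      apply Subtype.ext
      rw [show ((∑ k ∈ s, (⟨((r i) k : Ω), hCK ((r i) k).2⟩ : K) * ⟨w k, hwK k⟩ : K) : Ω)
        = K.subtype _ from rfl, map_sum]
      simpa using claim1 i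
    rw [heq, map_sum]
    rw [show ((∑ k ∈ s, σ₁ ((⟨((r i) k : Ω), hCK ((r i) k).2⟩ : K) * ⟨w k, hwK k⟩) : K) : Ω)
      = K.subtype _ from rfl, map_sum]
    exact Finset.sum_congr rfl fun k _ => by rw [map_mul]; rfl
  calc ∑ i, (σ₁ (a i) : Ω) * (σ₂ (b i) : Ω)
      = ∑ i, ∑ k ∈ s, (σ₁ ⟨w k, hwK k⟩ : Ω) *
          ((σ₂ ⟨((r i) k : Ω), hCL ((r i) k).2⟩ : Ω) * (σ₂ (b i) : Ω)) := by
        refine Finset.sum_congr rfl fun i _ => ?_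
        rw [claim2 i, Finset.sum_mul]
        refine Finset.sum_congr rfl fun k _ => ?_
        rw [hag ((r i) k : Ω) (hCK ((r i) k).2) (hCL ((r i) k).2) ((r i) k).2]
        ring
    _ = ∑ k ∈ s, (σ₁ ⟨w k, hwK k⟩ : Ω) * (σ₂ (g k) : Ω) := by
        rw [Finset.sum_comm]
        refine Finset.sum_congr rfl fun k _ => ?_
        rw [← Finset.mul_sum]
        congr 1
        rw [show (σ₂ (g k) : Ω) = L.subtype (σ₂ (g k)) from rfl]
        rw [show σ₂ (g k) = σ₂ (∑ i, (⟨((r i) k : Ω), hCL ((r i) k).2⟩ : L) * b i) from rfl,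
          map_sum, map_sum]
        exact Finset.sum_congr rfl fun i _ => by rw [map_mul]; rfl
    _ = 0 := by
        apply Finset.sum_eq_zero
        intro k hk
        rw [hg0 k hk, map_zero]
        simp

/-- `x` is a finite sum of products of elements of `K` and `L`. -/
def HasRep (K L : Subfield Ω) (x : Ω) : Prop :=
  ∃ (n : ℕ) (f : Fin n → K × L), x = ∑ i, ((f i).1 : Ω) * ((f i).2 : Ω)

theorem hasRep_of_K {x : Ω} (hx : x ∈ K) : HasRep K L x :=
  ⟨1, fun _ => (⟨x, hx⟩, 1), by simp⟩

theorem hasRep_of_L {x : Ω} (hx : x ∈ L) : HasRep K L x :=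
  ⟨1, fun _ => (1, ⟨x, hx⟩), by simp⟩

theorem hasRep_zero : HasRep K L (0 : Ω) := ⟨0, fun i => (1, 1), by simp⟩

theorem hasRep_one : HasRep K L (1 : Ω) := hasRep_of_K (one_mem K)

theorem hasRep_add {x y : Ω} (hx : HasRep K L x) (hy : HasRep K L y) :
    HasRep K L (x + y) := by
  obtain ⟨n, f, rfl⟩ := hx
  obtain ⟨m, g, rfl⟩ := hy
  refine ⟨n + m, Fin.addCases f g, ?_⟩
  rw [Fin.sum_univ_add]
  congr 1
  · exact Finset.sum_congr rfl fun i _ => by simp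
  · exact Finset.sum_congr rfl fun i _ => by simp

theorem hasRep_neg {x : Ω} (hx : HasRep K L x) : HasRep K L (-x) := by
  obtain ⟨n, f, rfl⟩ := hx
  refine ⟨n, fun i => (-(f i).1, (f i).2), ?_⟩
  rw [← Finset.sum_neg_distrib]
  exact Finset.sum_congr rfl fun i _ => by push_cast; ring

theorem hasRep_mul {x y : Ω} (hx : HasRep K L x) (hy : HasRep K L y) :
    HasRep K L (x * y) := by
  obtain ⟨n, f, rfl⟩ := hx
  obtain ⟨m, g, rfl⟩ := hy
  refine ⟨n * m, fun k => ((f (finProdFinEquiv.symm k).1).1 * (g (finProdFinEquiv.symm k).2).1,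
    (f (finProdFinEquiv.symm k).1).2 * (g (finProdFinEquiv.symm k).2).2), ?_⟩
  rw [Finset.sum_mul_sum]
  rw [← Equiv.sum_comp (finProdFinEquiv : Fin n × Fin m ≃ Fin (n * m))]
  rw [Fintype.sum_prod_type]
  refine Finset.sum_congr rfl fun i _ => Finset.sum_congr rfl fun j _ => ?_
  simp only [Equiv.symm_apply_apply]
  push_cast
  ring

theorem hasRep_mem_sup {x : Ω} (hx : HasRep K L x) : x ∈ K ⊔ L := by
  obtain ⟨n, f, rfl⟩ := hx
  exact Subfield.sum_mem _ fun i _ => mul_mem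
    (SetLike.le_def.1 le_sup_left (f i).1.2) (SetLike.le_def.1 le_sup_right (f i).2.2)

theorem mem_sup_exists_frac {x : Ω} (hx : x ∈ K ⊔ L) :
    ∃ y z : Ω, HasRep K L y ∧ HasRep K L z ∧ z ≠ 0 ∧ x = y / z := by
  rcases eq_or_ne x 0 with rfl | hx0
  · exact ⟨0, 1, hasRep_zero, hasRep_one, one_ne_zero, by simp⟩
  have hx' : x ∈ Subfield.closure ((K : Set Ω) ∪ (L : Set Ω)) := by
    rwa [Subfield.closure_union, Subfield.closure_eq, Subfield.closure_eq]
  rw [Subfield.mem_closure_iff] at hx'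
  obtain ⟨y, hy, z, hz, hyz⟩ := hx'
  have hrep : ∀ w : Ω, w ∈ Subring.closure ((K : Set Ω) ∪ (L : Set Ω)) → HasRep K L w := by
    intro w hw
    induction hw using Subring.closure_induction with
    | mem u hu => rcases hu with hu | hu
                  · exact hasRep_of_K hu
                  · exact hasRep_of_L hu
    | zero => exact hasRep_zero
    | one => exact hasRep_one
    | add _ _ _ _ h1 h2 => exact hasRep_add h1 h2
    | neg _ _ h1 => exact hasRep_neg h1
    | mul _ _ _ _ h1 h2 => exact hasRep_mul h1 h2
  have hz0 : z ≠ 0 := by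
    rintro rfl
    rw [div_zero] at hyz
    exact hx0 hyz.symm
  exact ⟨y, z, hrep y hy, hrep z hz, hz0, hyz.symm⟩

open Classical in
/-- Apply `σ₁ ⊗ σ₂` to a represented element. -/
noncomputable def phi0 (K L : Subfield Ω) (σ₁ : K ≃+* K) (σ₂ : L ≃+* L) (x : Ω) : Ω :=
  if h : HasRep K L x then
    ∑ i, ((σ₁ (h.choose_spec.choose i).1 : Ω) * (σ₂ (h.choose_spec.choose i).2 : Ω))
  else 0

section Phi
variable (hCK : C ≤ K) (hCL : C ≤ L) (hdisj : LinDisj C K L)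
  (σ₁ : K ≃+* K) (σ₂ : L ≃+* L)
  (hag : ∀ (x : Ω) (h₁ : x ∈ K) (h₂ : x ∈ L), x ∈ C →
      ((σ₁ ⟨x, h₁⟩ : Ω) = (σ₂ ⟨x, h₂⟩ : Ω)))

include hCK hCL hdisj hag

theorem phi0_spec {x : Ω} {n : ℕ} (f : Fin n → K × L)
    (hx : x = ∑ i, ((f i).1 : Ω) * ((f i).2 : Ω)) :
    phi0 K L σ₁ σ₂ x = ∑ i, ((σ₁ (f i).1 : Ω) * (σ₂ (f i).2 : Ω)) := by
  have h : HasRep K L x := ⟨n, f, hx⟩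
  rw [phi0, dif_pos h]
  set m := h.choose
  set f₀ : Fin m → K × L := h.choose_spec.choose with hf₀
  have hx₀ : x = ∑ i, ((f₀ i).1 : Ω) * ((f₀ i).2 : Ω) := h.choose_spec.choose_spec
  -- combined family indexed by `Fin m ⊕ Fin n`
  set a : Fin m ⊕ Fin n → K := Sum.elim (fun i => (f₀ i).1) (fun j => -(f j).1) with ha
  set b : Fin m ⊕ Fin n → L := Sum.elim (fun i => (f₀ i).2) (fun j => (f j).2) with hb
  have hzero : ∑ i, ((a i : Ω) * (b i : Ω)) = 0 := by
    rw [Fintype.sum_sum_type]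
    have h1 : ∑ i : Fin m, ((a (Sum.inl i) : Ω) * (b (Sum.inl i) : Ω)) = x := by
      rw [hx₀]; rfl
    have h2 : ∑ j : Fin n, ((a (Sum.inr j) : Ω) * (b (Sum.inr j) : Ω)) = -x := by
      rw [hx, ← Finset.sum_neg_distrib]
      refine Finset.sum_congr rfl fun j _ => ?_
      show ((-(f j).1 : K) : Ω) * ((f j).2 : Ω) = _
      push_cast
      ring
    rw [h1, h2]
    ring
  have hkey := keyB hCK hCL hdisj σ₁ σ₂ hag a b hzero
  rw [Fintype.sum_sum_type] at hkey
  have h1 : ∑ i : Fin m, ((σ₁ (a (Sum.inl i)) : Ω) * (σ₂ (b (Sum.inl i)) : Ω))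
      = ∑ i, ((σ₁ (f₀ i).1 : Ω) * (σ₂ (f₀ i).2 : Ω)) := rfl
  have h2 : ∑ j : Fin n, ((σ₁ (a (Sum.inr j)) : Ω) * (σ₂ (b (Sum.inr j)) : Ω))
      = -∑ j : Fin n, ((σ₁ (f j).1 : Ω) * (σ₂ (f j).2 : Ω)) := by
    rw [← Finset.sum_neg_distrib]
    refine Finset.sum_congr rfl fun j _ => ?_
    show ((σ₁ (-(f j).1) : K) : Ω) * ((σ₂ (f j).2 : L) : Ω) = _
    rw [map_neg]
    push_cast
    ring
  rw [h1, h2] at hkey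
  linear_combination hkey

theorem phi0_of_K {x : Ω} (hx : x ∈ K) : phi0 K L σ₁ σ₂ x = (σ₁ ⟨x, hx⟩ : Ω) := by
  rw [phi0_spec hCK hCL hdisj σ₁ σ₂ hag (fun _ : Fin 1 => ((⟨x, hx⟩ : K), 1)) (by simp)]
  simp

theorem phi0_of_L {x : Ω} (hx : x ∈ L) : phi0 K L σ₁ σ₂ x = (σ₂ ⟨x, hx⟩ : Ω) := by
  rw [phi0_spec hCK hCL hdisj σ₁ σ₂ hag (fun _ : Fin 1 => (1, (⟨x, hx⟩ : L))) (by simp)]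
  simp

theorem phi0_one : phi0 K L σ₁ σ₂ 1 = 1 := by
  rw [phi0_of_K hCK hCL hdisj σ₁ σ₂ hag (one_mem K)]
  rw [show (⟨(1 : Ω), one_mem K⟩ : K) = 1 from rfl, map_one, OneMemClass.coe_one]

theorem phi0_zero : phi0 K L σ₁ σ₂ 0 = 0 := by
  rw [phi0_of_K hCK hCL hdisj σ₁ σ₂ hag (zero_mem K)]
  rw [show (⟨(0 : Ω), zero_mem K⟩ : K) = 0 from rfl, map_zero, ZeroMemClass.coe_zero]

theorem phi0_add {x y : Ω} (hx : HasRep K L x) (hy : HasRep K L y) :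
    phi0 K L σ₁ σ₂ (x + y) = phi0 K L σ₁ σ₂ x + phi0 K L σ₁ σ₂ y := by
  obtain ⟨n, f, rfl⟩ := hx
  obtain ⟨m, g, rfl⟩ := hy
  rw [phi0_spec hCK hCL hdisj σ₁ σ₂ hag f rfl, phi0_spec hCK hCL hdisj σ₁ σ₂ hag g rfl,
    phi0_spec hCK hCL hdisj σ₁ σ₂ hag (Fin.addCases f g : Fin (n + m) → K × L)
      (by rw [Fin.sum_univ_add]; congr 1 <;> exact Finset.sum_congr rfl fun i _ => by simp),
    Fin.sum_univ_add]
  congr 1 <;> exact Finset.sum_congr rfl fun i _ => by simp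

theorem phi0_mul {x y : Ω} (hx : HasRep K L x) (hy : HasRep K L y) :
    phi0 K L σ₁ σ₂ (x * y) = phi0 K L σ₁ σ₂ x * phi0 K L σ₁ σ₂ y := by
  obtain ⟨n, f, rfl⟩ := hx
  obtain ⟨m, g, rfl⟩ := hy
  rw [phi0_spec hCK hCL hdisj σ₁ σ₂ hag f rfl, phi0_spec hCK hCL hdisj σ₁ σ₂ hag g rfl,
    phi0_spec hCK hCL hdisj σ₁ σ₂ hag
      (fun k : Fin (n * m) => ((f (finProdFinEquiv.symm k).1).1 * (g (finProdFinEquiv.symm k).2).1,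
        (f (finProdFinEquiv.symm k).1).2 * (g (finProdFinEquiv.symm k).2).2))
      (by
        rw [Finset.sum_mul_sum, ← Equiv.sum_comp (finProdFinEquiv : Fin n × Fin m ≃ Fin (n * m)),
          Fintype.sum_prod_type]
        refine Finset.sum_congr rfl fun i _ => Finset.sum_congr rfl fun j _ => ?_
        simp only [Equiv.symm_apply_apply]
        push_cast
        ring)]
  rw [Finset.sum_mul_sum, ← Equiv.sum_comp (finProdFinEquiv : Fin n × Fin m ≃ Fin (n * m)),
    Fintype.sum_prod_type]
  refine Finset.sum_congr rfl fun i _ => Finset.sum_congr rfl fun j _ => ?_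
  simp only [Equiv.symm_apply_apply, map_mul]
  push_cast
  ring

theorem phi0_hasRep {x : Ω} (hx : HasRep K L x) : HasRep K L (phi0 K L σ₁ σ₂ x) := by
  obtain ⟨n, f, rfl⟩ := hx
  rw [phi0_spec hCK hCL hdisj σ₁ σ₂ hag f rfl]
  exact ⟨n, fun i => (σ₁ (f i).1, σ₂ (f i).2), rfl⟩

end Phi

theorem phi0_inj (hCK : C ≤ K) (hCL : C ≤ L) (hdisj : LinDisj C K L)
    (σ₁ : K ≃+* K) (σ₂ : L ≃+* L)
    (hag : ∀ (x : Ω) (h₁ : x ∈ K) (h₂ : x ∈ L), x ∈ C →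
      ((σ₁ ⟨x, h₁⟩ : Ω) = (σ₂ ⟨x, h₂⟩ : Ω)))
    (hag' : ∀ (x : Ω) (h₁ : x ∈ K) (h₂ : x ∈ L), x ∈ C →
      ((σ₁.symm ⟨x, h₁⟩ : Ω) = (σ₂.symm ⟨x, h₂⟩ : Ω)))
    {x : Ω} (hx : HasRep K L x) (h0 : phi0 K L σ₁ σ₂ x = 0) : x = 0 := by
  obtain ⟨n, f, rfl⟩ := hx
  rw [phi0_spec hCK hCL hdisj σ₁ σ₂ hag f rfl] at h0
  have := keyB hCK hCL hdisj σ₁.symm σ₂.symm hag'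
    (fun i => σ₁ (f i).1) (fun i => σ₂ (f i).2) h0
  simpa using this

open Classical in
/-- Extend `phi0` to quotients. -/
noncomputable def psi0 (K L : Subfield Ω) (σ₁ : K ≃+* K) (σ₂ : L ≃+* L) (x : Ω) : Ω :=
  if h : ∃ y z : Ω, HasRep K L y ∧ HasRep K L z ∧ z ≠ 0 ∧ x = y / z then
    phi0 K L σ₁ σ₂ h.choose / phi0 K L σ₁ σ₂ h.choose_spec.choose
  else 0

section Psi

variable (hCK : C ≤ K) (hCL : C ≤ L) (hdisj : LinDisj C K L)
  (σ₁ : K ≃+* K) (σ₂ : L ≃+* L)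
  (hag : ∀ (x : Ω) (h₁ : x ∈ K) (h₂ : x ∈ L), x ∈ C →
      ((σ₁ ⟨x, h₁⟩ : Ω) = (σ₂ ⟨x, h₂⟩ : Ω)))
  (hag' : ∀ (x : Ω) (h₁ : x ∈ K) (h₂ : x ∈ L), x ∈ C →
      ((σ₁.symm ⟨x, h₁⟩ : Ω) = (σ₂.symm ⟨x, h₂⟩ : Ω)))

include hCK hCL hdisj hag hag'

theorem phi0_ne_zero {z : Ω} (hz : HasRep K L z) (hz0 : z ≠ 0) :
    phi0 K L σ₁ σ₂ z ≠ 0 :=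
  fun h0 => hz0 (phi0_inj hCK hCL hdisj σ₁ σ₂ hag hag' hz h0)

theorem psi0_spec {x y z : Ω} (hy : HasRep K L y) (hz : HasRep K L z) (hz0 : z ≠ 0)
    (hx : x = y / z) :
    psi0 K L σ₁ σ₂ x = phi0 K L σ₁ σ₂ y / phi0 K L σ₁ σ₂ z := by
  have h : ∃ y z : Ω, HasRep K L y ∧ HasRep K L z ∧ z ≠ 0 ∧ x = y / z := ⟨y, z, hy, hz, hz0, hx⟩
  rw [psi0, dif_pos h]
  obtain ⟨hy₀, hz₀, hz0₀, hx₀⟩ := h.choose_spec.choose_spec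
  set y₀ := h.choose with hy₀def
  set z₀ := h.choose_spec.choose with hz₀def
  have hcross : y₀ * z = y * z₀ := by
    have : y₀ / z₀ = y / z := by rw [← hx₀, ← hx]
    rw [div_eq_div_iff hz0₀ hz0] at this
    exact this
  have hphi : phi0 K L σ₁ σ₂ y₀ * phi0 K L σ₁ σ₂ z = phi0 K L σ₁ σ₂ y * phi0 K L σ₁ σ₂ z₀ := by
    rw [← phi0_mul hCK hCL hdisj σ₁ σ₂ hag hy₀ hz, ← phi0_mul hCK hCL hdisj σ₁ σ₂ hag hy hz₀,
      hcross]
  rw [div_eq_div_iff (phi0_ne_zero hCK hCL hdisj σ₁ σ₂ hag hag' hz₀ hz0₀)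
    (phi0_ne_zero hCK hCL hdisj σ₁ σ₂ hag hag' hz hz0)]
  exact hphi

theorem psi0_of_hasRep {x : Ω} (hx : HasRep K L x) :
    psi0 K L σ₁ σ₂ x = phi0 K L σ₁ σ₂ x := by
  rw [psi0_spec hCK hCL hdisj σ₁ σ₂ hag hag' hx hasRep_one one_ne_zero (div_one x).symm,
    phi0_one hCK hCL hdisj σ₁ σ₂ hag, div_one]

theorem psi0_of_K {x : Ω} (hx : x ∈ K) : psi0 K L σ₁ σ₂ x = (σ₁ ⟨x, hx⟩ : Ω) := by
  rw [psi0_of_hasRep hCK hCL hdisj σ₁ σ₂ hag hag' (hasRep_of_K hx),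
    phi0_of_K hCK hCL hdisj σ₁ σ₂ hag hx]

theorem psi0_of_L {x : Ω} (hx : x ∈ L) : psi0 K L σ₁ σ₂ x = (σ₂ ⟨x, hx⟩ : Ω) := by
  rw [psi0_of_hasRep hCK hCL hdisj σ₁ σ₂ hag hag' (hasRep_of_L hx),
    phi0_of_L hCK hCL hdisj σ₁ σ₂ hag hx]

theorem psi0_add {x y : Ω} (hx : x ∈ K ⊔ L) (hy : y ∈ K ⊔ L) :
    psi0 K L σ₁ σ₂ (x + y) = psi0 K L σ₁ σ₂ x + psi0 K L σ₁ σ₂ y := by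
  obtain ⟨y₁, z₁, hy₁, hz₁, hz₁0, rfl⟩ := mem_sup_exists_frac hx
  obtain ⟨y₂, z₂, hy₂, hz₂, hz₂0, rfl⟩ := mem_sup_exists_frac hy
  have hnum : HasRep K L (y₁ * z₂ + y₂ * z₁) :=
    hasRep_add (hasRep_mul hy₁ hz₂) (hasRep_mul hy₂ hz₁)
  have hden : HasRep K L (z₁ * z₂) := hasRep_mul hz₁ hz₂
  have hden0 : z₁ * z₂ ≠ 0 := mul_ne_zero hz₁0 hz₂0
  rw [psi0_spec hCK hCL hdisj σ₁ σ₂ hag hag' hnum hden hden0 (by field_simp; try ring),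
    psi0_spec hCK hCL hdisj σ₁ σ₂ hag hag' hy₁ hz₁ hz₁0 rfl,
    psi0_spec hCK hCL hdisj σ₁ σ₂ hag hag' hy₂ hz₂ hz₂0 rfl,
    phi0_add hCK hCL hdisj σ₁ σ₂ hag (hasRep_mul hy₁ hz₂) (hasRep_mul hy₂ hz₁),
    phi0_mul hCK hCL hdisj σ₁ σ₂ hag hy₁ hz₂, phi0_mul hCK hCL hdisj σ₁ σ₂ hag hy₂ hz₁,
    phi0_mul hCK hCL hdisj σ₁ σ₂ hag hz₁ hz₂]
  have h1 := phi0_ne_zero hCK hCL hdisj σ₁ σ₂ hag hag' hz₁ hz₁0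
  have h2 := phi0_ne_zero hCK hCL hdisj σ₁ σ₂ hag hag' hz₂ hz₂0
  field_simp
  try ring

theorem psi0_mul {x y : Ω} (hx : x ∈ K ⊔ L) (hy : y ∈ K ⊔ L) :
    psi0 K L σ₁ σ₂ (x * y) = psi0 K L σ₁ σ₂ x * psi0 K L σ₁ σ₂ y := by
  obtain ⟨y₁, z₁, hy₁, hz₁, hz₁0, rfl⟩ := mem_sup_exists_frac hx
  obtain ⟨y₂, z₂, hy₂, hz₂, hz₂0, rfl⟩ := mem_sup_exists_frac hy
  rw [psi0_spec hCK hCL hdisj σ₁ σ₂ hag hag' (hasRep_mul hy₁ hy₂) (hasRep_mul hz₁ hz₂)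
      (mul_ne_zero hz₁0 hz₂0) (by field_simp),
    psi0_spec hCK hCL hdisj σ₁ σ₂ hag hag' hy₁ hz₁ hz₁0 rfl,
    psi0_spec hCK hCL hdisj σ₁ σ₂ hag hag' hy₂ hz₂ hz₂0 rfl,
    phi0_mul hCK hCL hdisj σ₁ σ₂ hag hy₁ hy₂, phi0_mul hCK hCL hdisj σ₁ σ₂ hag hz₁ hz₂]
  rw [div_mul_div_comm]

theorem psi0_mem {x : Ω} (hx : x ∈ K ⊔ L) : psi0 K L σ₁ σ₂ x ∈ K ⊔ L := by
  obtain ⟨y, z, hy, hz, hz0, rfl⟩ := mem_sup_exists_frac hx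
  rw [psi0_spec hCK hCL hdisj σ₁ σ₂ hag hag' hy hz hz0 rfl]
  exact div_mem (hasRep_mem_sup (phi0_hasRep hCK hCL hdisj σ₁ σ₂ hag hy))
    (hasRep_mem_sup (phi0_hasRep hCK hCL hdisj σ₁ σ₂ hag hz))

theorem main_exists :
    ∃ σ : ↥(K ⊔ L) ≃+* ↥(K ⊔ L),
      (∀ (x : Ω) (h₁ : x ∈ K ⊔ L) (h₂ : x ∈ K), ((σ ⟨x, h₁⟩ : Ω) = (σ₁ ⟨x, h₂⟩ : Ω))) ∧
      (∀ (x : Ω) (h₁ : x ∈ K ⊔ L) (h₂ : x ∈ L), ((σ ⟨x, h₁⟩ : Ω) = (σ₂ ⟨x, h₂⟩ : Ω))) := by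
  have hone : psi0 K L σ₁ σ₂ 1 = 1 := by
    rw [psi0_of_K hCK hCL hdisj σ₁ σ₂ hag hag' (one_mem K),
      show (⟨(1 : Ω), one_mem K⟩ : K) = 1 from rfl, map_one, OneMemClass.coe_one]
  have hzero : psi0 K L σ₁ σ₂ 0 = 0 := by
    rw [psi0_of_K hCK hCL hdisj σ₁ σ₂ hag hag' (zero_mem K),
      show (⟨(0 : Ω), zero_mem K⟩ : K) = 0 from rfl, map_zero, ZeroMemClass.coe_zero]
  let Φ : ↥(K ⊔ L) →+* ↥(K ⊔ L) :=
  { toFun := fun u => ⟨psi0 K L σ₁ σ₂ u, psi0_mem hCK hCL hdisj σ₁ σ₂ hag hag' u.2⟩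
    map_one' := Subtype.ext hone
    map_mul' := fun u v => Subtype.ext (psi0_mul hCK hCL hdisj σ₁ σ₂ hag hag' u.2 v.2)
    map_zero' := Subtype.ext hzero
    map_add' := fun u v => Subtype.ext (psi0_add hCK hCL hdisj σ₁ σ₂ hag hag' u.2 v.2) }
  have hΦcoe : ∀ u : ↥(K ⊔ L), (Φ u : Ω) = psi0 K L σ₁ σ₂ u := fun u => rfl
  have hsurj : Function.Surjective Φ := by
    have key : ∀ (x : Ω), x ∈ Subfield.closure ((K : Set Ω) ∪ (L : Set Ω)) →
        ∃ u : ↥(K ⊔ L), (Φ u : Ω) = x := by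
      intro x hx
      induction hx using Subfield.closure_induction with
      | mem z hz =>
          rcases hz with hz | hz
          · refine ⟨⟨(σ₁.symm ⟨z, hz⟩ : Ω), SetLike.le_def.1 le_sup_left (σ₁.symm ⟨z, hz⟩).2⟩, ?_⟩
            rw [hΦcoe, psi0_of_K hCK hCL hdisj σ₁ σ₂ hag hag' (σ₁.symm ⟨z, hz⟩).2]
            rw [show (⟨((σ₁.symm ⟨z, hz⟩ : K) : Ω), (σ₁.symm ⟨z, hz⟩).2⟩ : K)
              = σ₁.symm ⟨z, hz⟩ from rfl]
            rw [RingEquiv.apply_symm_apply]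
          · refine ⟨⟨(σ₂.symm ⟨z, hz⟩ : Ω), SetLike.le_def.1 le_sup_right (σ₂.symm ⟨z, hz⟩).2⟩, ?_⟩
            rw [hΦcoe, psi0_of_L hCK hCL hdisj σ₁ σ₂ hag hag' (σ₂.symm ⟨z, hz⟩).2]
            rw [show (⟨((σ₂.symm ⟨z, hz⟩ : L) : Ω), (σ₂.symm ⟨z, hz⟩).2⟩ : L)
              = σ₂.symm ⟨z, hz⟩ from rfl]
            rw [RingEquiv.apply_symm_apply]
      | one => exact ⟨1, by rw [map_one]; rfl⟩
      | add x y hx hy ihx ihy =>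
          obtain ⟨u, hu⟩ := ihx
          obtain ⟨v, hv⟩ := ihy
          exact ⟨u + v, by rw [map_add]; push_cast; rw [hu, hv]⟩
      | neg x hx ihx =>
          obtain ⟨u, hu⟩ := ihx
          exact ⟨-u, by rw [map_neg]; push_cast; rw [hu]⟩
      | inv x hx ihx =>
          obtain ⟨u, hu⟩ := ihx
          exact ⟨u⁻¹, by rw [map_inv₀]; push_cast; rw [hu]⟩
      | mul x y hx hy ihx ihy =>
          obtain ⟨u, hu⟩ := ihx
          obtain ⟨v, hv⟩ := ihy
          exact ⟨u * v, by rw [map_mul]; push_cast; rw [hu, hv]⟩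
    intro v
    have hv : (v : Ω) ∈ Subfield.closure ((K : Set Ω) ∪ (L : Set Ω)) := by
      rw [Subfield.closure_union, Subfield.closure_eq, Subfield.closure_eq]
      exact v.2
    obtain ⟨u, hu⟩ := key (v : Ω) hv
    exact ⟨u, Subtype.ext hu⟩
  refine ⟨RingEquiv.ofBijective Φ ⟨Φ.injective, hsurj⟩, ?_, ?_⟩
  · intro x h₁ h₂
    show (Φ ⟨x, h₁⟩ : Ω) = _
    rw [hΦcoe]
    exact psi0_of_K hCK hCL hdisj σ₁ σ₂ hag hag' h₂
  · intro x h₁ h₂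
    show (Φ ⟨x, h₁⟩ : Ω) = _
    rw [hΦcoe]
    exact psi0_of_L hCK hCL hdisj σ₁ σ₂ hag hag' h₂

end Psi
end Key

section SepCl

theorem le_sepCl (A : Subfield Ω) : A ≤ sepCl A := by
  intro x hx
  show x ∈ (separableClosure A Ω).toSubfield
  rw [IntermediateField.mem_toSubfield]
  exact (separableClosure A Ω).algebraMap_mem ⟨x, hx⟩

theorem sepCl_mono {D A : Subfield Ω} (h : D ≤ A) : sepCl D ≤ sepCl A := by
  intro x hx
  have hsep : IsSeparable D x := by
    rw [sepCl, IntermediateField.mem_toSubfield, mem_separableClosure_iff] at hx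
    exact hx
  letI : Algebra D A := (Subfield.inclusion h).toAlgebra
  haveI : IsScalarTower D A Ω := IsScalarTower.of_algebraMap_eq (fun d => rfl)
  have : IsSeparable A x := IsSeparable.tower_top ↥A hsep
  show x ∈ (separableClosure A Ω).toSubfield
  rw [IntermediateField.mem_toSubfield, mem_separableClosure_iff]
  exact this

theorem sepCl_stab {A D : Subfield Ω} (hD : D ≤ A) (τ : ↥(sepCl A) ≃+* ↥(sepCl A))
    (hτ : ∀ u : ↥(sepCl A), (u : Ω) ∈ A → τ u = u) :
    ∀ (x : Ω) (hx : x ∈ sepCl A), x ∈ sepCl D → (τ ⟨x, hx⟩ : Ω) ∈ sepCl D := by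
  intro x hx hxD
  have hsep : IsSeparable D x := by
    rw [sepCl, IntermediateField.mem_toSubfield, mem_separableClosure_iff] at hxD
    exact hxD
  set p := minpoly D x with hp
  have hDKA : D ≤ sepCl A := le_trans hD (le_sepCl A)
  let i : ↥D →+* ↥(sepCl A) :=
  { toFun := fun d => ⟨(d : Ω), hDKA d.2⟩
    map_one' := rfl
    map_mul' := fun _ _ => rfl
    map_zero' := rfl
    map_add' := fun _ _ => rfl }
  have hsub : ((sepCl A).subtype).comp i = algebraMap D Ω := RingHom.ext fun d => rfl
  have h1 : Polynomial.eval₂ i ⟨x, hx⟩ p = 0 := by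
    have h1' : (sepCl A).subtype (Polynomial.eval₂ i ⟨x, hx⟩ p) = (sepCl A).subtype 0 := by
      rw [Polynomial.hom_eval₂, hsub, map_zero]
      show Polynomial.eval₂ (algebraMap D Ω) x p = 0
      rw [← Polynomial.aeval_def]
      exact minpoly.aeval D x
    exact (sepCl A).subtype.injective h1'
  let g : ↥(sepCl A) →+* Ω := (sepCl A).subtype.comp (τ : ↥(sepCl A) →+* ↥(sepCl A))
  have h2 : Polynomial.eval₂ (g.comp i) (g ⟨x, hx⟩) p = 0 := by
    rw [← Polynomial.hom_eval₂, h1, map_zero]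
  have hgi : g.comp i = algebraMap D Ω := RingHom.ext fun d => by
    show (τ ⟨(d : Ω), hDKA d.2⟩ : Ω) = d
    rw [hτ ⟨(d : Ω), hDKA d.2⟩ (hD d.2)]
  rw [hgi] at h2
  have haev : Polynomial.aeval ((τ ⟨x, hx⟩ : Ω)) p = 0 := by
    rw [Polynomial.aeval_def]
    exact h2
  have hsep' : IsSeparable D ((τ ⟨x, hx⟩ : Ω)) :=
    Polynomial.Separable.of_dvd hsep (minpoly.dvd D _ haev)
  show (τ ⟨x, hx⟩ : Ω) ∈ (separableClosure D Ω).toSubfield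
  rw [IntermediateField.mem_toSubfield, mem_separableClosure_iff]
  exact hsep'

end SepCl
end PacAux



open PacPaper in
open PacAux in
/-- Let `A`, `B` be subfields of `Ω` with `C = A ∩ B`, and suppose `A^s` and
`B^s` are linearly disjoint over `C^s`.  Then any `σ₁ ∈ Gal(A^s/A)` and
`σ₂ ∈ Gal(B^s/B)` agreeing on `C^s` have a common extension
`σ ∈ Gal(A^sB^s/AB)` restricting to `σ₁` on `A^s` and to `σ₂` on `B^s`. -/
theorem exists_common_extension_of_linearly_disjoint
    (Ω : Type) [Field Ω] [IsAlgClosed Ω] (A B : Subfield Ω)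
    (hdisj : LinDisj (sepCl (A ⊓ B)) (sepCl A) (sepCl B)) :
    ∀ σ₁ ∈ galGrp A (sepCl A), ∀ σ₂ ∈ galGrp B (sepCl B),
      Agree σ₁ σ₂ (sepCl (A ⊓ B)) →
      ∃ σ ∈ galGrp (A ⊔ B) (sepCl A ⊔ sepCl B),
        RestrictsTo σ σ₁ ∧ RestrictsTo σ σ₂ := by
  intro σ₁ hσ₁ σ₂ hσ₂ hagree
  have hCK : sepCl (A ⊓ B) ≤ sepCl A := sepCl_mono inf_le_left
  have hCL : sepCl (A ⊓ B) ≤ sepCl B := sepCl_mono inf_le_right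
  have hσ₁' : ∀ u : ↥(sepCl A), (u : Ω) ∈ A → σ₁ u = u := hσ₁
  have hσ₂' : ∀ u : ↥(sepCl B), (u : Ω) ∈ B → σ₂ u = u := hσ₂
  have hσ₁s : ∀ u : ↥(sepCl A), (u : Ω) ∈ A → σ₁.symm u = u := by
    intro u hu
    conv_lhs => rw [← hσ₁' u hu]
    exact σ₁.symm_apply_apply u
  have hσ₂s : ∀ u : ↥(sepCl B), (u : Ω) ∈ B → σ₂.symm u = u := by
    intro u hu
    conv_lhs => rw [← hσ₂' u hu]
    exact σ₂.symm_apply_apply u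
  have hag : ∀ (x : Ω) (h₁ : x ∈ sepCl A) (h₂ : x ∈ sepCl B), x ∈ sepCl (A ⊓ B) →
      ((σ₁ ⟨x, h₁⟩ : Ω) = (σ₂ ⟨x, h₂⟩ : Ω)) := hagree
  have hag' : ∀ (x : Ω) (h₁ : x ∈ sepCl A) (h₂ : x ∈ sepCl B), x ∈ sepCl (A ⊓ B) →
      ((σ₁.symm ⟨x, h₁⟩ : Ω) = (σ₂.symm ⟨x, h₂⟩ : Ω)) := by
    intro x h₁ h₂ hxC
    have huC : (σ₁.symm ⟨x, h₁⟩ : Ω) ∈ sepCl (A ⊓ B) :=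
      sepCl_stab inf_le_left σ₁.symm hσ₁s x h₁ hxC
    have huK : (σ₁.symm ⟨x, h₁⟩ : Ω) ∈ sepCl A := (σ₁.symm ⟨x, h₁⟩).2
    have huL : (σ₁.symm ⟨x, h₁⟩ : Ω) ∈ sepCl B := hCL huC
    have h5 := hag _ huK huL huC
    rw [show (⟨(σ₁.symm ⟨x, h₁⟩ : Ω), huK⟩ : ↥(sepCl A)) = σ₁.symm ⟨x, h₁⟩ from rfl,
      RingEquiv.apply_symm_apply] at h5
    -- h5 : x = ↑(σ₂ ⟨↑(σ₁.symm ⟨x, h₁⟩), huL⟩)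
    have h3 : σ₂ ⟨(σ₁.symm ⟨x, h₁⟩ : Ω), huL⟩ = ⟨x, h₂⟩ := Subtype.ext h5.symm
    have h4 := congrArg σ₂.symm h3
    rw [RingEquiv.symm_apply_apply] at h4
    exact (congrArg Subtype.val h4).symm ▸ rfl
  obtain ⟨σ, hK, hL⟩ := main_exists hCK hCL hdisj σ₁ σ₂ hag hag'
  have hABle : A ⊔ B ≤ sepCl A ⊔ sepCl B := sup_le_sup (le_sepCl A) (le_sepCl B)
  have hclos : Subfield.closure ((A : Set Ω) ∪ (B : Set Ω)) = A ⊔ B := by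
    rw [Subfield.closure_union, Subfield.closure_eq, Subfield.closure_eq]
  refine ⟨σ, ?_, fun x h₁ h₂ _ => hK x h₁ h₂, fun x h₁ h₂ _ => hL x h₁ h₂⟩
  -- membership in the Galois group
  intro u hu
  have key : ∀ x : Ω, x ∈ Subfield.closure ((A : Set Ω) ∪ (B : Set Ω)) →
      ∀ h : x ∈ sepCl A ⊔ sepCl B, σ ⟨x, h⟩ = ⟨x, h⟩ := by
    intro x hx
    induction hx using Subfield.closure_induction with
    | mem z hz =>
        intro h
        apply Subtype.ext
        rcases hz with hz | hz
        · rw [hK z h (le_sepCl A hz)]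
          have := hσ₁' ⟨z, le_sepCl A hz⟩ hz
          rw [this]
        · rw [hL z h (le_sepCl B hz)]
          have := hσ₂' ⟨z, le_sepCl B hz⟩ hz
          rw [this]
    | one =>
        intro h
        rw [show (⟨(1 : Ω), h⟩ : ↥(sepCl A ⊔ sepCl B)) = 1 from rfl, map_one]
    | add x y hx hy ihx ihy =>
        intro h
        have hx' : x ∈ sepCl A ⊔ sepCl B := hABle (hclos ▸ hx)
        have hy' : y ∈ sepCl A ⊔ sepCl B := hABle (hclos ▸ hy)
        rw [show (⟨x + y, h⟩ : ↥(sepCl A ⊔ sepCl B)) = ⟨x, hx'⟩ + ⟨y, hy'⟩ from rfl,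
          map_add, ihx hx', ihy hy']
    | neg x hx ihx =>
        intro h
        have hx' : x ∈ sepCl A ⊔ sepCl B := hABle (hclos ▸ hx)
        rw [show (⟨-x, h⟩ : ↥(sepCl A ⊔ sepCl B)) = -⟨x, hx'⟩ from rfl, map_neg, ihx hx']
    | inv x hx ihx =>
        intro h
        have hx' : x ∈ sepCl A ⊔ sepCl B := hABle (hclos ▸ hx)
        rw [show (⟨x⁻¹, h⟩ : ↥(sepCl A ⊔ sepCl B)) = (⟨x, hx'⟩ : ↥(sepCl A ⊔ sepCl B))⁻¹
          from rfl, map_inv₀, ihx hx']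
    | mul x y hx hy ihx ihy =>
        intro h
        have hx' : x ∈ sepCl A ⊔ sepCl B := hABle (hclos ▸ hx)
        have hy' : y ∈ sepCl A ⊔ sepCl B := hABle (hclos ▸ hy)
        rw [show (⟨x * y, h⟩ : ↥(sepCl A ⊔ sepCl B)) = ⟨x, hx'⟩ * ⟨y, hy'⟩ from rfl,
          map_mul, ihx hx', ihy hy']
  have := key (u : Ω) (by rw [hclos]; exact hu) u.2
  simpa using this
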